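/- Fix β > 0 and C > 0. Then ∫₀^{2C/β} 4C√β · f(2C, 0, u) du = log( 1 + (2√(2π)·C/√β)·e^{C²/(2β)}·Erf(C/√(2β)) ). -/

import Mathlib

/-- The error function `Erf x = (2/√π)·∫₀ˣ e^{−u²} du`. -/
noncomputable def Erf (x : ℝ) : ℝ :=
  (2 / Real.sqrt Real.pi) * ∫ u in (0:ℝ)..x, Real.exp (-u ^ 2)

/-- `f(a,b,t)` from the SQF limit-cycle analysis (for parameters `β`, `C`). -/
noncomputable def f (β C a b t : ℝ) : ℝ :=
  Real.exp (-(t / 2) * (2 * b - 2 * C + β * t)) /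
    (2 * Real.sqrt β +
      a * Real.exp ((b - C) ^ 2 / (2 * β)) * Real.sqrt (2 * Real.pi) *
        (Erf ((b - C + β * t) / Real.sqrt (2 * β)) -
         Erf ((b - C) / Real.sqrt (2 * β))))

lemma erf_hasDerivAt (x : ℝ) :
    HasDerivAt Erf (2 / Real.sqrt Real.pi * Real.exp (-x ^ 2)) x := by
  have hcont : Continuous fun u : ℝ => Real.exp (-u ^ 2) := by continuity
  have h := intervalIntegral.integral_hasDerivAt_right
    (hcont.intervalIntegrable 0 x)
    (hcont.stronglyMeasurable.stronglyMeasurableAtFilter)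
    hcont.continuousAt
  exact h.const_mul (2 / Real.sqrt Real.pi)

lemma erf_mono : Monotone Erf := by
  have h : ∀ x, HasDerivAt Erf (2 / Real.sqrt Real.pi * Real.exp (-x ^ 2)) x := erf_hasDerivAt
  apply monotone_of_deriv_nonneg (fun x => (h x).differentiableAt)
  intro x
  rw [(h x).deriv]
  positivity

lemma erf_zero : Erf 0 = 0 := by simp [Erf]

lemma erf_neg (x : ℝ) : Erf (-x) = -Erf x := by
  have h := intervalIntegral.integral_comp_neg (a := (0:ℝ)) (b := x)
    (fun u => Real.exp (-u ^ 2))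
  simp only [neg_zero, neg_neg, neg_sq] at h
  unfold Erf
  rw [intervalIntegral.integral_symm, ← h]
  ring

/-- The denominator of `f β C (2C) 0`. -/
noncomputable def Dfun (β C : ℝ) (t : ℝ) : ℝ :=
  2 * Real.sqrt β +
    2 * C * Real.exp ((0 - C) ^ 2 / (2 * β)) * Real.sqrt (2 * Real.pi) *
      (Erf ((0 - C + β * t) / Real.sqrt (2 * β)) -
       Erf ((0 - C) / Real.sqrt (2 * β)))

lemma sqrt_const_eq (β : ℝ) (hβ : 0 < β) :
    Real.sqrt 2 * Real.sqrt Real.pi * (2 / Real.sqrt Real.pi) *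
      (β / (Real.sqrt 2 * Real.sqrt β)) = 2 * Real.sqrt β := by
  have hπ : (0:ℝ) < Real.sqrt Real.pi := Real.sqrt_pos.mpr Real.pi_pos
  have hsb : (0:ℝ) < Real.sqrt β := Real.sqrt_pos.mpr hβ
  have h2 : (0:ℝ) < Real.sqrt 2 := by positivity
  have e : Real.sqrt 2 * Real.sqrt Real.pi * (2 / Real.sqrt Real.pi) *
      (β / (Real.sqrt 2 * Real.sqrt β)) =
      2 * (Real.sqrt 2 / Real.sqrt 2) * (Real.sqrt Real.pi / Real.sqrt Real.pi) *
        (β / Real.sqrt β) := by ring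
  rw [e, div_self h2.ne', div_self hπ.ne', Real.div_sqrt]
  ring

lemma Dfun_hasDerivAt (β C : ℝ) (hβ : 0 < β) (t : ℝ) :
    HasDerivAt (Dfun β C)
      (4 * C * Real.sqrt β * Real.exp (-(t / 2) * (2 * 0 - 2 * C + β * t))) t := by
  have h2β : (0:ℝ) < 2 * β := by positivity
  have hs : (0:ℝ) < Real.sqrt (2 * β) := Real.sqrt_pos.mpr h2β
  have hinner : HasDerivAt (fun u : ℝ => (0 - C + β * u) / Real.sqrt (2 * β))
      (β / Real.sqrt (2 * β)) t := by
    have h := (((hasDerivAt_id t).const_mul β).const_add (0 - C)).div_const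
      (Real.sqrt (2 * β))
    simpa using h
  have herf := (erf_hasDerivAt ((0 - C + β * t) / Real.sqrt (2 * β))).comp t hinner
  have hD := ((herf.sub_const (Erf ((0 - C) / Real.sqrt (2 * β)))).const_mul
      (2 * C * Real.exp ((0 - C) ^ 2 / (2 * β)) * Real.sqrt (2 * Real.pi))).const_add
      (2 * Real.sqrt β)
  have deq : 2 * C * Real.exp ((0 - C) ^ 2 / (2 * β)) * Real.sqrt (2 * Real.pi) *
      (2 / Real.sqrt Real.pi * Real.exp (-((0 - C + β * t) / Real.sqrt (2 * β)) ^ 2) *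
        (β / Real.sqrt (2 * β))) =
      4 * C * Real.sqrt β * Real.exp (-(t / 2) * (2 * 0 - 2 * C + β * t)) := by
    have hXsq : ((0 - C + β * t) / Real.sqrt (2 * β)) ^ 2 = (0 - C + β * t) ^ 2 / (2 * β) := by
      rw [div_pow, Real.sq_sqrt h2β.le]
    have hexp : Real.exp ((0 - C) ^ 2 / (2 * β)) *
        Real.exp (-((0 - C + β * t) ^ 2 / (2 * β))) =
        Real.exp (-(t / 2) * (2 * 0 - 2 * C + β * t)) := by
      rw [← Real.exp_add]
      congr 1
      field_simp
      ring
    have hsplit : Real.sqrt (2 * Real.pi) = Real.sqrt 2 * Real.sqrt Real.pi :=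
      Real.sqrt_mul (by norm_num) _
    have hsplit2 : Real.sqrt (2 * β) = Real.sqrt 2 * Real.sqrt β :=
      Real.sqrt_mul (by norm_num) _
    calc 2 * C * Real.exp ((0 - C) ^ 2 / (2 * β)) * Real.sqrt (2 * Real.pi) *
          (2 / Real.sqrt Real.pi * Real.exp (-((0 - C + β * t) / Real.sqrt (2 * β)) ^ 2) *
            (β / Real.sqrt (2 * β)))
        = 2 * C * (Real.sqrt 2 * Real.sqrt Real.pi * (2 / Real.sqrt Real.pi) *
            (β / (Real.sqrt 2 * Real.sqrt β))) *
            (Real.exp ((0 - C) ^ 2 / (2 * β)) *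
              Real.exp (-((0 - C + β * t) ^ 2 / (2 * β)))) := by
          rw [hXsq, hsplit, hsplit2]; ring
      _ = 2 * C * (2 * Real.sqrt β) *
            Real.exp (-(t / 2) * (2 * 0 - 2 * C + β * t)) := by
          rw [sqrt_const_eq β hβ, hexp]
      _ = 4 * C * Real.sqrt β * Real.exp (-(t / 2) * (2 * 0 - 2 * C + β * t)) := by ring
  rw [← deq]
  exact hD

lemma Dfun_pos (β C : ℝ) (hβ : 0 < β) (hC : 0 < C) {t : ℝ} (ht : 0 ≤ t) :
    0 < Dfun β C t := by
  have hsb : (0:ℝ) < Real.sqrt β := Real.sqrt_pos.mpr hβ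
  have hs : (0:ℝ) < Real.sqrt (2 * β) := Real.sqrt_pos.mpr (by positivity)
  have hβt : (0:ℝ) ≤ β * t := mul_nonneg hβ.le ht
  have hmono : Erf ((0 - C) / Real.sqrt (2 * β)) ≤
      Erf ((0 - C + β * t) / Real.sqrt (2 * β)) := by
    apply erf_mono
    apply div_le_div_of_nonneg_right ?_ hs.le
    linarith
  have hK : 0 ≤ 2 * C * Real.exp ((0 - C) ^ 2 / (2 * β)) * Real.sqrt (2 * Real.pi) := by
    positivity
  unfold Dfun
  nlinarith [mul_nonneg hK (sub_nonneg.mpr hmono)]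

/-- Total contribution of the decaying rate `Ã₁(t) = 2√β·2C·f(2C,0,t)` of
flow 1 over the phase of duration `2C/β` in the SQF limit cycle. -/
theorem sqf_rate_decay_phase_integral (β C : ℝ) (hβ : 0 < β) (hC : 0 < C) :
    ∫ u in (0:ℝ)..(2 * C / β), 4 * C * Real.sqrt β * f β C (2 * C) 0 u =
      Real.log (1 + (2 * Real.sqrt (2 * Real.pi) * C / Real.sqrt β) *
        Real.exp (C ^ 2 / (2 * β)) * Erf (C / Real.sqrt (2 * β))) := by
  have hsb : (0:ℝ) < Real.sqrt β := Real.sqrt_pos.mpr hβ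
  have hT : (0:ℝ) ≤ 2 * C / β := by positivity
  have hErfc : Continuous Erf :=
    Differentiable.continuous (fun x => (erf_hasDerivAt x).differentiableAt)
  have hDcont : Continuous (Dfun β C) := by
    unfold Dfun
    exact continuous_const.add (continuous_const.mul
      ((hErfc.comp (by continuity)).sub continuous_const))
  have hpos : ∀ x ∈ Set.uIcc (0:ℝ) (2 * C / β), 0 < Dfun β C x := by
    intro x hx
    rw [Set.uIcc_of_le hT] at hx
    exact Dfun_pos β C hβ hC hx.1
  have hfeq : ∀ x, 4 * C * Real.sqrt β * f β C (2 * C) 0 x =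
      4 * C * Real.sqrt β * Real.exp (-(x / 2) * (2 * 0 - 2 * C + β * x)) / Dfun β C x := by
    intro x
    simp only [f, Dfun]
    ring
  have hderiv : ∀ x ∈ Set.uIcc (0:ℝ) (2 * C / β),
      HasDerivAt (fun t => Real.log (Dfun β C t))
        (4 * C * Real.sqrt β * f β C (2 * C) 0 x) x := by
    intro x hx
    have h := (Dfun_hasDerivAt β C hβ x).log (hpos x hx).ne'
    rw [hfeq x]
    exact h
  have hint : IntervalIntegrable (fun u => 4 * C * Real.sqrt β * f β C (2 * C) 0 u)
      MeasureTheory.volume 0 (2 * C / β) := by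
    apply ContinuousOn.intervalIntegrable
    have : ContinuousOn (fun u =>
        4 * C * Real.sqrt β * Real.exp (-(u / 2) * (2 * 0 - 2 * C + β * u)) / Dfun β C u)
        (Set.uIcc (0:ℝ) (2 * C / β)) := by
      apply ContinuousOn.div
      · exact (Continuous.continuousOn (by continuity))
      · exact hDcont.continuousOn
      · exact fun x hx => (hpos x hx).ne'
    exact this.congr (fun x _ => hfeq x)
  rw [intervalIntegral.integral_eq_sub_of_hasDerivAt hderiv hint]
  have hD0 : Dfun β C 0 = 2 * Real.sqrt β := by
    unfold Dfun
    norm_num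
  have harg : (0 - C + β * (2 * C / β)) / Real.sqrt (2 * β) = C / Real.sqrt (2 * β) := by
    congr 1
    field_simp
    ring
  have hErfnn : 0 ≤ Erf (C / Real.sqrt (2 * β)) := by
    have hs : (0:ℝ) < Real.sqrt (2 * β) := Real.sqrt_pos.mpr (by positivity)
    have h := erf_mono (show (0:ℝ) ≤ C / Real.sqrt (2 * β) by positivity)
    rwa [erf_zero] at h
  have hr : 0 < 1 + (2 * Real.sqrt (2 * Real.pi) * C / Real.sqrt β) *
      Real.exp (C ^ 2 / (2 * β)) * Erf (C / Real.sqrt (2 * β)) := by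
    have h1 : 0 ≤ (2 * Real.sqrt (2 * Real.pi) * C / Real.sqrt β) *
        Real.exp (C ^ 2 / (2 * β)) * Erf (C / Real.sqrt (2 * β)) :=
      mul_nonneg (mul_nonneg (by positivity) (Real.exp_pos _).le) hErfnn
    linarith
  have hDT : Dfun β C (2 * C / β) = 2 * Real.sqrt β *
      (1 + (2 * Real.sqrt (2 * Real.pi) * C / Real.sqrt β) *
        Real.exp (C ^ 2 / (2 * β)) * Erf (C / Real.sqrt (2 * β))) := by
    unfold Dfun
    rw [harg, show ((0:ℝ) - C) / Real.sqrt (2 * β) = -(C / Real.sqrt (2 * β)) by ring,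
      erf_neg, show ((0:ℝ) - C) ^ 2 = C ^ 2 by ring]
    field_simp
    ring
  rw [hD0, hDT, Real.log_mul (by positivity) hr.ne']
  ring
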